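/- For every Wolf space of compact type different from ℍP^n (equivalently, for every Wolf root λ of a compact simple Lie algebra g not isomorphic to sp(n+1)), there exists a long root α with |λ|² = 2⟨α,λ⟩ = |α|², and for nonzero X ∈ L_α, Y ∈ L_{λ−α} the quaternionic bisectional curvature is strictly negative: K_{ℍ,I}(X,Y) = −(κ/(8n(n+2)))·g(X,X)·g(Y,Y) < 0 (with κ > 0). -/

import Mathlib

open RealInnerProductSpace

/-- The standard basis vector `ε_i` of Euclidean space. -/
noncomputable def stdVec {n : ℕ} (i : Fin n) : EuclideanSpace ℝ (Fin n) :=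
  EuclideanSpace.single i (1 : ℝ)

/-- The roots `±ε_μ ± ε_ν` (μ ≠ ν); this is the root system of type `D_n`. -/
noncomputable def rootsDn (n : ℕ) : Set (EuclideanSpace ℝ (Fin n)) :=
  {v | ∃ i j : Fin n, ∃ s t : ℝ, i ≠ j ∧ (s = 1 ∨ s = -1) ∧ (t = 1 ∨ t = -1) ∧
    v = s • stdVec i + t • stdVec j}

/-- The root system of type `A_n` realized in `ℝ^{n+1}`. -/
noncomputable def rootsAn (n : ℕ) : Set (EuclideanSpace ℝ (Fin (n + 1))) :=
  {v | ∃ i j : Fin (n + 1), i ≠ j ∧ v = stdVec i - stdVec j}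

/-- The root system of type `B_n`: `{±ε_μ ± ε_ν} ∪ {±ε_μ}`. -/
noncomputable def rootsBn (n : ℕ) : Set (EuclideanSpace ℝ (Fin n)) :=
  rootsDn n ∪ {v | ∃ i : Fin n, ∃ s : ℝ, (s = 1 ∨ s = -1) ∧ v = s • stdVec i}

/-- The root system of type `C_n`: `{±ε_μ ± ε_ν} ∪ {±2ε_μ}`. -/
noncomputable def rootsCn (n : ℕ) : Set (EuclideanSpace ℝ (Fin n)) :=
  rootsDn n ∪ {v | ∃ i : Fin n, ∃ s : ℝ, (s = 2 ∨ s = -2) ∧ v = s • stdVec i}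

/-- The half-integer roots of `E₈`. -/
def halfRootsE8 : Set (EuclideanSpace ℝ (Fin 8)) :=
  {v | (∀ i, v i = 1/2 ∨ v i = -1/2) ∧ 0 < ∏ i, v i}

/-- The root system of type `E₈`. -/
noncomputable def rootsE8 : Set (EuclideanSpace ℝ (Fin 8)) :=
  rootsDn 8 ∪ halfRootsE8

/-- The root system of type `E₇` inside `E₈`. -/
noncomputable def rootsE7 : Set (EuclideanSpace ℝ (Fin 8)) :=
  {v ∈ rootsE8 | ⟪v, stdVec 6 + stdVec 7⟫ = 0}

/-- The root system of type `E₆` inside `E₇`. -/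
noncomputable def rootsE6 : Set (EuclideanSpace ℝ (Fin 8)) :=
  {v ∈ rootsE7 | ⟪v, stdVec 5 - stdVec 6⟫ = 0}

/-- The root system of type `F₄`. -/
noncomputable def rootsF4 : Set (EuclideanSpace ℝ (Fin 4)) :=
  rootsBn 4 ∪ {v | ∀ i, v i = 1/2 ∨ v i = -1/2}

/-- The root system of type `G₂`. -/
noncomputable def rootsG2 : Set (EuclideanSpace ℝ (Fin 3)) :=
  {v | ∃ i j : Fin 3, i ≠ j ∧ v = stdVec i - stdVec j} ∪
  {v | ∃ i j k : Fin 3, i ≠ j ∧ i ≠ k ∧ j ≠ k ∧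
    (v = (2 : ℝ) • stdVec i - stdVec j - stdVec k ∨
     v = -((2 : ℝ) • stdVec i - stdVec j - stdVec k))}

/-- The types of irreducible root systems; the compact simple Lie algebras
`sp(n+1)` are exactly those of type `C_{n+1}` (with `C_1 = A_1`). -/
inductive RSType : Type
  | A : ℕ → RSType
  | B : ℕ → RSType
  | C : ℕ → RSType
  | D : ℕ → RSType
  | E6 : RSType
  | E7 : RSType
  | E8 : RSType
  | F4 : RSType
  | G2 : RSType

/-- Dimension of the ambient Euclidean space of our realization. -/
def RSType.dim : RSType → ℕ
  | .A n => n + 1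
  | .B n => n
  | .C n => n
  | .D n => n
  | .E6 => 8
  | .E7 => 8
  | .E8 => 8
  | .F4 => 4
  | .G2 => 3

/-- Rank restrictions so that each irreducible root system appears once. -/
def RSType.valid : RSType → Prop
  | .A n => 1 ≤ n
  | .B n => 3 ≤ n
  | .C n => 2 ≤ n
  | .D n => 3 ≤ n
  | _ => True

/-- The set of roots of each type. -/
noncomputable def RSType.roots : (t : RSType) → Set (EuclideanSpace ℝ (Fin t.dim))
  | .A n => rootsAn n
  | .B n => rootsBn n
  | .C n => rootsCn n
  | .D n => rootsDn n
  | .E6 => rootsE6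
  | .E7 => rootsE7
  | .E8 => rootsE8
  | .F4 => rootsF4
  | .G2 => rootsG2

/-- `lam` is a Wolf root, i.e. a maximal root of the root system with respect
to the positive system determined by a linear functional `f` not vanishing on
any root. -/
def IsWolfRoot {m : ℕ} (Δ : Set (EuclideanSpace ℝ (Fin m)))
    (f : EuclideanSpace ℝ (Fin m) →ₗ[ℝ] ℝ) (lam : EuclideanSpace ℝ (Fin m)) :
    Prop :=
  lam ∈ Δ ∧ (∀ α ∈ Δ, f α ≠ 0) ∧ ∀ α ∈ Δ, f α ≤ f lam

/- ############ auxiliary lemmas ############ -/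

lemma inn_std {m : ℕ} (i j : Fin m) : ⟪stdVec i, stdVec j⟫ = if i = j then (1:ℝ) else 0 := by
  simp [stdVec, EuclideanSpace.inner_single_left, EuclideanSpace.single_apply, eq_comm]

lemma stdVec_apply {m : ℕ} (i c : Fin m) : stdVec i c = if i = c then (1:ℝ) else 0 := by
  simp [stdVec, EuclideanSpace.single_apply, eq_comm]

lemma inner_vec_left {m : ℕ} (i : Fin m) (v : EuclideanSpace ℝ (Fin m)) :
    ⟪stdVec i, v⟫ = v i := by
  simp [stdVec, EuclideanSpace.inner_single_left]

lemma inner_two_two {m : ℕ} (i j i' j' : Fin m) (s t s' t' : ℝ) :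
    ⟪s • stdVec i + t • stdVec j, s' • stdVec i' + t' • stdVec j'⟫ =
      s*s'*(if i = i' then 1 else 0) + s*t'*(if i = j' then 1 else 0) +
      t*s'*(if j = i' then 1 else 0) + t*t'*(if j = j' then 1 else 0) := by
  simp only [inner_add_left, inner_add_right, real_inner_smul_left, real_inner_smul_right, inn_std]
  ring

lemma inner_two_vec {m : ℕ} (i j : Fin m) (s t : ℝ) (v : EuclideanSpace ℝ (Fin m)) :
    ⟪s • stdVec i + t • stdVec j, v⟫ = s * v i + t * v j := by
  simp only [inner_add_left, real_inner_smul_left, inner_vec_left]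

lemma comb_apply {m : ℕ} (i j c : Fin m) (s t : ℝ) :
    (s • stdVec i + t • stdVec j) c
      = s * (if i = c then 1 else 0) + t * (if j = c then 1 else 0) := by
  simp [stdVec, EuclideanSpace.single_apply, eq_comm]

lemma exists_avoid {m : ℕ} (h : 3 ≤ m) (i j : Fin m) : ∃ k : Fin m, k ≠ i ∧ k ≠ j := by
  by_contra hc
  push_neg at hc
  have hsub : (Finset.univ : Finset (Fin m)) ⊆ {i, j} := by
    intro k _
    rcases eq_or_ne k i with h1 | h1
    · simp [h1]
    · simp [hc k h1]
  have h2 := (Finset.card_le_card hsub).trans (Finset.card_insert_le _ _)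
  simp [Finset.card_univ] at h2
  omega

lemma exists_avoid5 {m : ℕ} (h : 6 ≤ m) (i j p q r : Fin m) :
    ∃ k : Fin m, k ≠ i ∧ k ≠ j ∧ k ≠ p ∧ k ≠ q ∧ k ≠ r := by
  by_contra hc
  push_neg at hc
  have hsub : (Finset.univ : Finset (Fin m)) ⊆ {i, j, p, q, r} := by
    intro k _
    by_cases h1 : k = i; · simp [h1]
    by_cases h2 : k = j; · simp [h2]
    by_cases h3 : k = p; · simp [h3]
    by_cases h4 : k = q; · simp [h4]
    simp [hc k h1 h2 h3 h4]
  have h2 := Finset.card_le_card hsub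
  have h3 : ({i, j, p, q, r} : Finset (Fin m)).card ≤ 5 := by
    apply le_trans (Finset.card_insert_le _ _)
    have h4 := Finset.card_insert_le j ({p, q, r} : Finset (Fin m))
    have h5 := Finset.card_insert_le p ({q, r} : Finset (Fin m))
    have h6 := Finset.card_insert_le q ({r} : Finset (Fin m))
    simp only [Finset.card_singleton] at h6
    omega
  simp [Finset.card_univ] at h2
  omega

lemma euclid_inner_sum {m : ℕ} (v w : EuclideanSpace ℝ (Fin m)) :
    ⟪v, w⟫ = ∑ c, v c * w c := by
  simp [PiLp.inner_apply, RCLike.inner_apply]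
  exact Finset.sum_congr rfl (fun _ _ => mul_comm _ _)

lemma half_norm8 (v : EuclideanSpace ℝ (Fin 8)) (hv : ∀ i, v i = 1/2 ∨ v i = -1/2) :
    ⟪v, v⟫ = 2 := by
  rw [euclid_inner_sum]
  have h : ∀ c : Fin 8, v c * v c = 1/4 := by
    intro c; rcases hv c with h | h <;> rw [h] <;> norm_num
  rw [Finset.sum_congr rfl (fun c _ => h c)]
  norm_num

lemma f_decomp4 (v : EuclideanSpace ℝ (Fin 4)) (f : EuclideanSpace ℝ (Fin 4) →ₗ[ℝ] ℝ) :
    f v = v 0 * f (stdVec 0) + v 1 * f (stdVec 1) + v 2 * f (stdVec 2) + v 3 * f (stdVec 3) := by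
  have hv : v = v 0 • stdVec 0 + v 1 • stdVec 1 + v 2 • stdVec 2 + v 3 • stdVec 3 := by
    ext c
    fin_cases c <;> simp [stdVec_apply]
  conv_lhs => rw [hv]
  simp [smul_eq_mul]

lemma final_step {m : ℕ} (lam α : EuclideanSpace ℝ (Fin m)) (hlam0 : lam ≠ 0)
    (h1 : ⟪lam, lam⟫ = 2 * ⟪α, lam⟫) (h2 : 2 * ⟪α, lam⟫ = ⟪α, α⟫) :
    ∀ κ gXX gYY : ℝ, ∀ n : ℕ, 0 < κ → 0 < n → 0 < gXX → 0 < gYY →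
      κ / (2 * (n : ℝ) * ((n : ℝ) + 2)) * (⟪α, lam - α⟫ / ⟪lam, lam⟫ + 1/4) * (gXX * gYY) =
        -(κ / (8 * (n : ℝ) * ((n : ℝ) + 2))) * (gXX * gYY) ∧
      -(κ / (8 * (n : ℝ) * ((n : ℝ) + 2))) * (gXX * gYY) < 0 := by
  intro κ gXX gYY n hκ hn hX hY
  have hL : (0:ℝ) < ⟪lam, lam⟫ :=
    lt_of_le_of_ne real_inner_self_nonneg (Ne.symm (inner_self_ne_zero.mpr hlam0))
  have hr : ⟪α, lam - α⟫ / ⟪lam, lam⟫ = -(1/2) := by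
    rw [inner_sub_right]
    have hnum : ⟪α, lam⟫ - ⟪α, α⟫ = -(1/2) * ⟪lam, lam⟫ := by linarith
    rw [hnum, mul_div_assoc, div_self (ne_of_gt hL), mul_one]
  rw [hr]
  have hn' : (0:ℝ) < n := by exact_mod_cast hn
  constructor
  · have h2n : (2 * (n:ℝ) * ((n:ℝ) + 2)) ≠ 0 := by positivity
    have h8n : (8 * (n:ℝ) * ((n:ℝ) + 2)) ≠ 0 := by positivity
    field_simp
    ring
  · have hpos : 0 < κ / (8 * (n:ℝ) * ((n:ℝ) + 2)) * (gXX * gYY) := by positivity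
    linarith

/-- Core computation for the `D`-type choice of `α`. -/
lemma Dcalc {m : ℕ} (i j k : Fin m) (s t : ℝ) (hs : s = 1 ∨ s = -1) (ht : t = 1 ∨ t = -1)
    (hij : i ≠ j) (hki : k ≠ i) (hkj : k ≠ j) :
    ⟪s • stdVec i + t • stdVec j, s • stdVec i + t • stdVec j⟫ =
      2 * ⟪s • stdVec i + (1:ℝ) • stdVec k, s • stdVec i + t • stdVec j⟫ ∧
    2 * ⟪s • stdVec i + (1:ℝ) • stdVec k, s • stdVec i + t • stdVec j⟫ =
      ⟪s • stdVec i + (1:ℝ) • stdVec k, s • stdVec i + (1:ℝ) • stdVec k⟫ := by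
  rw [inner_two_two, inner_two_two, inner_two_two]
  simp only [if_pos rfl, if_neg hij, if_neg hki, if_neg hkj, if_neg (Ne.symm hij),
    if_neg (Ne.symm hki), if_neg (Ne.symm hkj)]
  rcases hs with h | h <;> rcases ht with h' | h' <;> rw [h, h'] <;> norm_num

/-- Core computation for the `D`-type choice of `α = s ε_i + u ε_k`. -/
lemma Dcalc' {m : ℕ} (i j k : Fin m) (s t u : ℝ) (hs : s = 1 ∨ s = -1) (ht : t = 1 ∨ t = -1)
    (hu : u = 1 ∨ u = -1) (hij : i ≠ j) (hki : k ≠ i) (hkj : k ≠ j) :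
    ⟪s • stdVec i + t • stdVec j, s • stdVec i + t • stdVec j⟫ =
      2 * ⟪s • stdVec i + u • stdVec k, s • stdVec i + t • stdVec j⟫ ∧
    2 * ⟪s • stdVec i + u • stdVec k, s • stdVec i + t • stdVec j⟫ =
      ⟪s • stdVec i + u • stdVec k, s • stdVec i + u • stdVec k⟫ := by
  rw [inner_two_two, inner_two_two, inner_two_two]
  simp only [if_pos rfl, if_neg hij, if_neg hki, if_neg hkj, if_neg (Ne.symm hij),
    if_neg (Ne.symm hki), if_neg (Ne.symm hkj)]
  rcases hs with h | h <;> rcases ht with h' | h' <;> rcases hu with h'' | h'' <;>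
    rw [h, h', h''] <;> norm_num

/-- A short root `± ε_i` cannot be maximal when the `D`-roots and short roots
are present. -/
lemma B_short_exclusion {m : ℕ} (hm : 3 ≤ m) (f : EuclideanSpace ℝ (Fin m) →ₗ[ℝ] ℝ)
    (i : Fin m) (s : ℝ) (Δ : Set (EuclideanSpace ℝ (Fin m)))
    (hD : rootsDn m ⊆ Δ) (hS : ∀ (k : Fin m) (u : ℝ), (u = 1 ∨ u = -1) → u • stdVec k ∈ Δ)
    (hreg : ∀ α ∈ Δ, f α ≠ 0) (hmax : ∀ α ∈ Δ, f α ≤ f (s • stdVec i))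
    (hs : s = 1 ∨ s = -1) : False := by
  obtain ⟨k, hki, -⟩ := exists_avoid hm i i
  have h1 := hmax _ (hD ⟨i, k, s, 1, Ne.symm hki, hs, Or.inl rfl, rfl⟩)
  have h2 := hmax _ (hD ⟨i, k, s, -1, Ne.symm hki, hs, Or.inr rfl, rfl⟩)
  have h3 := hreg _ (hS k 1 (Or.inl rfl))
  simp only [map_add, map_smul, smul_eq_mul, one_mul, neg_one_mul, one_smul] at h1 h2 h3
  rcases lt_or_gt_of_ne h3 with h | h <;> linarith

lemma inner_vec_right {m : ℕ} (i : Fin m) (v : EuclideanSpace ℝ (Fin m)) :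
    ⟪v, stdVec i⟫ = v i := by
  rw [real_inner_comm, inner_vec_left]

lemma orth67 (v : EuclideanSpace ℝ (Fin 8)) :
    ⟪v, stdVec 6 + stdVec 7⟫ = v 6 + v 7 := by
  rw [inner_add_right, inner_vec_right, inner_vec_right]

lemma orth56 (v : EuclideanSpace ℝ (Fin 8)) :
    ⟪v, stdVec 5 - stdVec 6⟫ = v 5 - v 6 := by
  rw [inner_sub_right, inner_vec_right, inner_vec_right]

/-- coordinates of a `D`-type root. -/
lemma comb_self {m : ℕ} (i j : Fin m) (s u : ℝ) (hij : i ≠ j) :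
    (s • stdVec i + u • stdVec j) i = s ∧ (s • stdVec i + u • stdVec j) j = u := by
  constructor <;> rw [comb_apply] <;>
    simp [if_pos rfl, if_neg hij, if_neg (Ne.symm hij)]

lemma comb_support {m : ℕ} (i j c : Fin m) (s u : ℝ)
    (h : (s • stdVec i + u • stdVec j) c ≠ 0) : c = i ∨ c = j := by
  by_contra hc
  push_neg at hc
  rw [comb_apply, if_neg (fun h' => hc.1 h'.symm), if_neg (fun h' => hc.2 h'.symm)] at h
  simp at h

/-- Inner product of two vectors supported on the same three coordinates. -/
lemma inner_triple {m : ℕ} (i j k : Fin m) (a b c a' b' c' : ℝ)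
    (hij : i ≠ j) (hik : i ≠ k) (hjk : j ≠ k) :
    ⟪a • stdVec i + b • stdVec j + c • stdVec k,
      a' • stdVec i + b' • stdVec j + c' • stdVec k⟫ = a * a' + b * b' + c * c' := by
  simp only [inner_add_left, inner_add_right, real_inner_smul_left, real_inner_smul_right,
    inn_std, if_pos rfl, if_neg hij, if_neg hik, if_neg hjk, if_neg (Ne.symm hij),
    if_neg (Ne.symm hik), if_neg (Ne.symm hjk), if_true, eq_self_iff_true]
  ring

/-- The computation for the half-root case in the `E`-series. -/
lemma E_half_calc (lam α : EuclideanSpace ℝ (Fin 8)) (hv : ∀ i, lam i = 1/2 ∨ lam i = -1/2)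
    (hα : α = (2 * lam 0) • stdVec 0 + (2 * lam 1) • stdVec 1) :
    ⟪lam, lam⟫ = 2 * ⟪α, lam⟫ ∧ 2 * ⟪α, lam⟫ = ⟪α, α⟫ := by
  subst hα
  have q0 : lam 0 * lam 0 = 1/4 := by rcases hv 0 with h | h <;> rw [h] <;> norm_num
  have q1 : lam 1 * lam 1 = 1/4 := by rcases hv 1 with h | h <;> rw [h] <;> norm_num
  have h01 : (0 : Fin 8) ≠ 1 := by decide
  rw [half_norm8 lam hv, inner_two_vec,
    inner_two_two 0 1 0 1 (2 * lam 0) (2 * lam 1) (2 * lam 0) (2 * lam 1)]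
  simp only [if_pos rfl, if_neg h01, if_neg (Ne.symm h01), if_true]
  constructor <;> nlinarith [q0, q1]

lemma E_half_mem (lam : EuclideanSpace ℝ (Fin 8)) (hv : ∀ i, lam i = 1/2 ∨ lam i = -1/2) :
    ((2 * lam 0) • stdVec 0 + (2 * lam 1) • stdVec 1) ∈ rootsDn 8 := by
  refine ⟨0, 1, 2 * lam 0, 2 * lam 1, by decide, ?_, ?_, rfl⟩
  · rcases hv 0 with h | h <;> rw [h] <;> norm_num
  · rcases hv 1 with h | h <;> rw [h] <;> norm_num

set_option maxHeartbeats 1000000 in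
lemma E7_special (σ : ℝ) (hσ : σ = 1 ∨ σ = -1) (lam : EuclideanSpace ℝ (Fin 8))
    (hlam : lam = σ • stdVec 6 + (-σ) • stdVec 7) :
    ∃ α ∈ rootsE7, ⟪lam, lam⟫ = 2 * ⟪α, lam⟫ ∧ 2 * ⟪α, lam⟫ = ⟪α, α⟫ := by
  classical
  set α : EuclideanSpace ℝ (Fin 8) := WithLp.toLp 2 (fun c : Fin 8 =>
    if c = 6 then σ/2 else if c = 7 then -(σ/2) else if c = 0 then -(1/2) else 1/2) with hαdef
  have hσ2 : σ * σ = 1 := by rcases hσ with rfl | rfl <;> norm_num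
  have hv : ∀ c : Fin 8, α c = 1/2 ∨ α c = -1/2 := by
    intro c
    fin_cases c <;> rcases hσ with rfl | rfl <;>
      simp (config := { decide := true }) [hαdef] <;> norm_num
  have hprod : 0 < ∏ c, α c := by
    rw [Fin.prod_univ_eight]
    simp (config := { decide := true }) [hαdef]
    nlinarith [hσ2]
  have horth : ⟪α, stdVec 6 + stdVec 7⟫ = 0 := by
    rw [orth67]
    simp (config := { decide := true }) [hαdef]
  have hAL : ⟪α, lam⟫ = σ * σ := by
    rw [hlam, real_inner_comm, inner_two_vec]
    simp (config := { decide := true }) [hαdef]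
    ring
  have hLL : ⟪lam, lam⟫ = 2 * (σ * σ) := by
    rw [hlam, inner_two_two]
    simp (config := { decide := true })
    ring
  have hAA : ⟪α, α⟫ = 2 := half_norm8 _ hv
  exact ⟨α, ⟨Or.inr ⟨hv, hprod⟩, horth⟩,
    by rw [hLL, hAL, hσ2], by rw [hAL, hAA, hσ2]; norm_num⟩

lemma E7_D_cases (i j : Fin 8) (s u : ℝ) (hs : s = 1 ∨ s = -1) (hu : u = 1 ∨ u = -1)
    (hij : i ≠ j)
    (h67 : (s • stdVec i + u • stdVec j) 6 + (s • stdVec i + u • stdVec j) 7 = 0) :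
    (i ≠ 6 ∧ i ≠ 7 ∧ j ≠ 6 ∧ j ≠ 7) ∨
    ∃ σ : ℝ, (σ = 1 ∨ σ = -1) ∧
      s • stdVec i + u • stdVec j = σ • stdVec 6 + (-σ) • stdVec 7 := by
  have hs0 : s ≠ 0 := by rcases hs with rfl | rfl <;> norm_num
  have hu0 : u ≠ 0 := by rcases hu with rfl | rfl <;> norm_num
  have hli : (s • stdVec i + u • stdVec j) i = s := (comb_self i j s u hij).1
  have hlj : (s • stdVec i + u • stdVec j) j = u := (comb_self i j s u hij).2
  by_cases h7 : (s • stdVec i + u • stdVec j) 7 = 0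
  · have h6 : (s • stdVec i + u • stdVec j) 6 = 0 := by linarith
    left
    refine ⟨fun h => hs0 ?_, fun h => hs0 ?_, fun h => hu0 ?_, fun h => hu0 ?_⟩
    · subst h; exact hli.symm.trans h6
    · subst h; exact hli.symm.trans h7
    · subst h; exact hlj.symm.trans h6
    · subst h; exact hlj.symm.trans h7
  · right
    have h6 : (s • stdVec i + u • stdVec j) 6 ≠ 0 := fun h => h7 (by linarith)
    rcases comb_support i j 7 s u h7 with h7i | h7j <;>
      rcases comb_support i j 6 s u h6 with h6i | h6j
    · exact absurd (h6i.trans h7i.symm) (by decide)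
    · -- i = 7, j = 6
      subst h7i; subst h6j
      rw [hli, hlj] at h67
      refine ⟨u, hu, ?_⟩
      have hsu : s = -u := by linarith
      rw [hsu]
      module
    · -- i = 6, j = 7
      subst h7j; subst h6i
      rw [hli, hlj] at h67
      refine ⟨s, hs, ?_⟩
      have hus : u = -s := by linarith
      rw [hus]
    · exact absurd (h6j.trans h7j.symm) (by decide)

lemma F4_half_exclusion (f : EuclideanSpace ℝ (Fin 4) →ₗ[ℝ] ℝ)
    (lam : EuclideanSpace ℝ (Fin 4)) (hv : ∀ i, lam i = 1/2 ∨ lam i = -1/2)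
    (hreg : ∀ α ∈ rootsF4, f α ≠ 0) (hmax : ∀ α ∈ rootsF4, f α ≤ f lam) : False := by
  have hsgn : ∀ c : Fin 4, 2 * lam c = 1 ∨ 2 * lam c = -1 := fun c => by
    rcases hv c with h | h <;> rw [h] <;> norm_num
  have hsgn' : -(2 * lam 2) = 1 ∨ -(2 * lam 2) = -1 := by
    rcases hsgn 2 with h | h <;> rw [h] <;> norm_num
  have t01 := hmax _ (Or.inl (Or.inl ⟨0, 1, _, _, by decide, hsgn 0, hsgn 1, rfl⟩))
  have t23 := hmax _ (Or.inl (Or.inl ⟨2, 3, _, _, by decide, hsgn 2, hsgn 3, rfl⟩))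
  have t02 := hmax _ (Or.inl (Or.inl ⟨0, 2, _, _, by decide, hsgn 0, hsgn 2, rfl⟩))
  have t13 := hmax _ (Or.inl (Or.inl ⟨1, 3, _, _, by decide, hsgn 1, hsgn 3, rfl⟩))
  have hr := hreg ((2 * lam 1) • stdVec 1 + (-(2 * lam 2)) • stdVec 2)
    (Or.inl (Or.inl ⟨1, 2, _, _, by decide, hsgn 1, hsgn', rfl⟩))
  rw [f_decomp4 lam f] at t01 t23 t02 t13
  simp only [map_add, map_smul, smul_eq_mul] at t01 t23 t02 t13 hr
  rcases lt_or_gt_of_ne hr with h | h <;> linarith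

lemma G2_short_exclusion (f : EuclideanSpace ℝ (Fin 3) →ₗ[ℝ] ℝ) (i j : Fin 3) (hij : i ≠ j)
    (hreg : ∀ α ∈ rootsG2, f α ≠ 0)
    (hmax : ∀ α ∈ rootsG2, f α ≤ f (stdVec i - stdVec j)) : False := by
  obtain ⟨k, hki, hkj⟩ := exists_avoid (le_refl 3) i j
  have h1 := hmax _ (Or.inr ⟨i, j, k, hij, Ne.symm hki, Ne.symm hkj, Or.inl rfl⟩)
  have h2 := hmax _ (Or.inl ⟨k, j, hkj, rfl⟩)
  have h3 := hreg _ (Or.inl ⟨i, k, Ne.symm hki, rfl⟩)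
  simp only [map_sub, map_smul, smul_eq_mul] at h1 h2 h3
  rcases lt_or_gt_of_ne h3 with h | h <;> linarith

/-- Negative quaternionic bisectional curvature on Wolf spaces other than
`ℍP^n`.  For every Wolf root `λ` of a compact simple Lie algebra `g` not
isomorphic to `sp(n+1)` (i.e. of type different from `A₁` and `C_n`), there
exists a long root `α` with `|λ|² = 2⟨α,λ⟩ = |α|²`.  Consequently, by the
formula `K_{ℍ,I}(X,Y) = (κ/(2n(n+2)))(⟨α,λ−α⟩/⟨λ,λ⟩ + 1/4)·g(X,X)·g(Y,Y)`
for nonzero `X ∈ L_α`, `Y ∈ L_{λ−α}`, the quaternionic bisectional curvature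
equals `−(κ/(8n(n+2)))·g(X,X)·g(Y,Y) < 0` whenever `κ > 0`. -/
theorem wolf_space_negative_bisectional (t : RSType) (hval : t.valid)
    (hA1 : t ≠ .A 1) (hC : ∀ m, t ≠ .C m)
    (f : EuclideanSpace ℝ (Fin t.dim) →ₗ[ℝ] ℝ)
    (lam : EuclideanSpace ℝ (Fin t.dim)) (hlam : IsWolfRoot t.roots f lam) :
    ∃ α ∈ t.roots,
      ⟪lam, lam⟫ = 2 * ⟪α, lam⟫ ∧ 2 * ⟪α, lam⟫ = ⟪α, α⟫ ∧
      ∀ κ gXX gYY : ℝ, ∀ n : ℕ, 0 < κ → 0 < n → 0 < gXX → 0 < gYY →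
        κ / (2 * (n : ℝ) * ((n : ℝ) + 2)) *
            (⟪α, lam - α⟫ / ⟪lam, lam⟫ + 1/4) * (gXX * gYY) =
          -(κ / (8 * (n : ℝ) * ((n : ℝ) + 2))) * (gXX * gYY) ∧
        -(κ / (8 * (n : ℝ) * ((n : ℝ) + 2))) * (gXX * gYY) < 0 := by
  obtain ⟨hlamΔ, hreg, hmax⟩ := hlam
  have hlam0 : lam ≠ 0 := fun h => hreg lam hlamΔ (by rw [h, map_zero])
  suffices key : ∃ α ∈ t.roots, ⟪lam, lam⟫ = 2 * ⟪α, lam⟫ ∧ 2 * ⟪α, lam⟫ = ⟪α, α⟫ by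
    obtain ⟨α, hαmem, h1, h2⟩ := key
    exact ⟨α, hαmem, h1, h2, final_step lam α hlam0 h1 h2⟩
  cases t with
  | C n => exact absurd rfl (hC n)
  | A n =>
    have hn1 : n ≠ 1 := fun h => hA1 (by rw [h])
    have hn : (1:ℕ) ≤ n := hval
    obtain ⟨i, j, hij, rfl⟩ := hlamΔ
    obtain ⟨k, hki, hkj⟩ := exists_avoid (by omega : 3 ≤ n + 1) i j
    refine ⟨stdVec i - stdVec k, ⟨i, k, Ne.symm hki, rfl⟩, ?_⟩
    have hE : stdVec i - stdVec j = (1:ℝ) • stdVec i + (-1:ℝ) • stdVec j := by module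
    have hE2 : stdVec i - stdVec k = (1:ℝ) • stdVec i + (-1:ℝ) • stdVec k := by module
    rw [hE, hE2]
    exact Dcalc' i j k 1 (-1) (-1) (Or.inl rfl) (Or.inr rfl) (Or.inr rfl) hij hki hkj
  | B n =>
    rcases hlamΔ with hDpart | hshort
    · obtain ⟨i, j, s, u, hij, hs, ht, rfl⟩ := hDpart
      obtain ⟨k, hki, hkj⟩ := exists_avoid hval i j
      exact ⟨s • stdVec i + (1:ℝ) • stdVec k,
        Or.inl ⟨i, k, s, 1, Ne.symm hki, hs, Or.inl rfl, rfl⟩,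
        Dcalc' i j k s u 1 hs ht (Or.inl rfl) hij hki hkj⟩
    · obtain ⟨i, s, hs, rfl⟩ := hshort
      exact (B_short_exclusion hval f i s (rootsBn n)
        Set.subset_union_left (fun k u hu => Or.inr ⟨k, u, hu, rfl⟩) hreg hmax hs).elim
  | D n =>
    obtain ⟨i, j, s, u, hij, hs, ht, rfl⟩ := hlamΔ
    obtain ⟨k, hki, hkj⟩ := exists_avoid hval i j
    exact ⟨s • stdVec i + (1:ℝ) • stdVec k,
      ⟨i, k, s, 1, Ne.symm hki, hs, Or.inl rfl, rfl⟩,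
      Dcalc' i j k s u 1 hs ht (Or.inl rfl) hij hki hkj⟩
  | E8 =>
    rcases hlamΔ with hDpart | hhalf
    · obtain ⟨i, j, s, u, hij, hs, ht, rfl⟩ := hDpart
      obtain ⟨k, hki, hkj⟩ := exists_avoid (by norm_num) i j
      exact ⟨s • stdVec i + (1:ℝ) • stdVec k,
        Or.inl ⟨i, k, s, 1, Ne.symm hki, hs, Or.inl rfl, rfl⟩,
        Dcalc' i j k s u 1 hs ht (Or.inl rfl) hij hki hkj⟩
    · exact ⟨_, Or.inl (E_half_mem lam hhalf.1), E_half_calc lam _ hhalf.1 rfl⟩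
  | E7 =>
    simp only [RSType.dim, RSType.roots] at f lam hreg hmax hlam0 hlamΔ ⊢
    obtain ⟨hE8, horth⟩ := hlamΔ
    have hco : lam 6 + lam 7 = 0 := by rw [← orth67]; exact horth
    rcases hE8 with hDpart | hhalf
    · obtain ⟨i, j, s, u, hij, hs, ht, hlam_eq⟩ := hDpart
      rcases E7_D_cases i j s u hs ht hij (by rw [← hlam_eq]; exact hco) with
        ⟨hi6, hi7, hj6, hj7⟩ | ⟨σ, hσ, heq⟩
      · obtain ⟨k, hki, hkj, hk6, hk7, -⟩ := exists_avoid5 (by norm_num) i j 6 7 7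
        subst hlam_eq
        refine ⟨s • stdVec i + (1:ℝ) • stdVec k,
          ⟨Or.inl ⟨i, k, s, 1, Ne.symm hki, hs, Or.inl rfl, rfl⟩, ?_⟩,
          Dcalc' i j k s u 1 hs ht (Or.inl rfl) hij hki hkj⟩
        rw [orth67, comb_apply, comb_apply]
        rw [if_neg hi6, if_neg hi7, if_neg hk6, if_neg hk7]
        ring
      · exact E7_special σ hσ lam (hlam_eq.trans heq)
    · refine ⟨_, ⟨Or.inl (E_half_mem lam hhalf.1), ?_⟩, E_half_calc lam _ hhalf.1 rfl⟩
      rw [orth67, comb_apply, comb_apply]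
      norm_num [show ((0:Fin 8) ≠ 6) from by decide, show ((0:Fin 8) ≠ 7) from by decide,
        show ((1:Fin 8) ≠ 6) from by decide, show ((1:Fin 8) ≠ 7) from by decide]
  | E6 =>
    simp only [RSType.dim, RSType.roots] at f lam hreg hmax hlam0 hlamΔ ⊢
    obtain ⟨⟨hE8, horth67⟩, horth56⟩ := hlamΔ
    have hco6 : lam 6 + lam 7 = 0 := by rw [← orth67]; exact horth67
    have hco5 : lam 5 - lam 6 = 0 := by rw [← orth56]; exact horth56
    rcases hE8 with hDpart | hhalf
    · obtain ⟨i, j, s, u, hij, hs, ht, hlam_eq⟩ := hDpart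
      have hs0 : s ≠ 0 := by rcases hs with rfl | rfl <;> norm_num
      have hu0 : u ≠ 0 := by rcases ht with rfl | rfl <;> norm_num
      have hli : lam i = s := by rw [hlam_eq]; exact (comb_self i j s u hij).1
      have hlj : lam j = u := by rw [hlam_eq]; exact (comb_self i j s u hij).2
      have h7 : lam 7 = 0 := by
        by_contra h7
        have h6 : lam 6 ≠ 0 := fun h => h7 (by linarith)
        have h5 : lam 5 ≠ 0 := fun h => h6 (by linarith)
        rw [hlam_eq] at h5 h6 h7
        rcases comb_support i j 5 s u h5 with h5' | h5' <;>
          rcases comb_support i j 6 s u h6 with h6' | h6' <;>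
            rcases comb_support i j 7 s u h7 with h7' | h7'
        all_goals first
          | exact absurd (h5'.trans h6'.symm) (by decide)
          | exact absurd (h5'.trans h7'.symm) (by decide)
          | exact absurd (h6'.trans h7'.symm) (by decide)
      have h6 : lam 6 = 0 := by linarith
      have h5 : lam 5 = 0 := by linarith
      have hi5 : i ≠ 5 := fun h => hs0 (by rw [← hli, h]; exact h5)
      have hi6 : i ≠ 6 := fun h => hs0 (by rw [← hli, h]; exact h6)
      have hi7 : i ≠ 7 := fun h => hs0 (by rw [← hli, h]; exact h7)
      have hj5 : j ≠ 5 := fun h => hu0 (by rw [← hlj, h]; exact h5)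
      have hj6 : j ≠ 6 := fun h => hu0 (by rw [← hlj, h]; exact h6)
      have hj7 : j ≠ 7 := fun h => hu0 (by rw [← hlj, h]; exact h7)
      obtain ⟨k, hki, hkj, hk5, hk6, hk7⟩ := exists_avoid5 (by norm_num) i j 5 6 7
      subst hlam_eq
      refine ⟨s • stdVec i + (1:ℝ) • stdVec k,
        ⟨⟨Or.inl ⟨i, k, s, 1, Ne.symm hki, hs, Or.inl rfl, rfl⟩, ?_⟩, ?_⟩,
        Dcalc' i j k s u 1 hs ht (Or.inl rfl) hij hki hkj⟩
      · rw [orth67, comb_apply, comb_apply]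
        rw [if_neg hi6, if_neg hi7, if_neg hk6, if_neg hk7]
        ring
      · rw [orth56, comb_apply, comb_apply]
        rw [if_neg hi5, if_neg hi6, if_neg hk5, if_neg hk6]
        ring
    · refine ⟨_, ⟨⟨Or.inl (E_half_mem lam hhalf.1), ?_⟩, ?_⟩, E_half_calc lam _ hhalf.1 rfl⟩
      · rw [orth67, comb_apply, comb_apply]
        norm_num [show ((0:Fin 8) ≠ 6) from by decide, show ((0:Fin 8) ≠ 7) from by decide,
          show ((1:Fin 8) ≠ 6) from by decide, show ((1:Fin 8) ≠ 7) from by decide]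
      · rw [orth56, comb_apply, comb_apply]
        norm_num [show ((0:Fin 8) ≠ 5) from by decide, show ((0:Fin 8) ≠ 6) from by decide,
          show ((1:Fin 8) ≠ 5) from by decide, show ((1:Fin 8) ≠ 6) from by decide]
  | F4 =>
    rcases hlamΔ with (hDpart | hshort) | hhalf
    · obtain ⟨i, j, s, u, hij, hs, ht, rfl⟩ := hDpart
      obtain ⟨k, hki, hkj⟩ := exists_avoid (by norm_num) i j
      exact ⟨s • stdVec i + (1:ℝ) • stdVec k,
        Or.inl (Or.inl ⟨i, k, s, 1, Ne.symm hki, hs, Or.inl rfl, rfl⟩),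
        Dcalc' i j k s u 1 hs ht (Or.inl rfl) hij hki hkj⟩
    · obtain ⟨i, s, hs, rfl⟩ := hshort
      exact (B_short_exclusion (m := 4) (by norm_num) f i s rootsF4
        (fun v hv => Or.inl (Or.inl hv)) (fun k u hu => Or.inl (Or.inr ⟨k, u, hu, rfl⟩))
        hreg hmax hs).elim
    · exact (F4_half_exclusion f lam hhalf hreg hmax).elim
  | G2 =>
    rcases hlamΔ with hshort | hlong
    · obtain ⟨i, j, hij, rfl⟩ := hshort
      exact (G2_short_exclusion f i j hij hreg hmax).elim
    · obtain ⟨i, j, k, hij, hik, hjk, hcase⟩ := hlong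
      rcases hcase with rfl | rfl
      · refine ⟨-((2:ℝ) • stdVec j - stdVec i - stdVec k),
          Or.inr ⟨j, i, k, Ne.symm hij, hjk, hik, Or.inr rfl⟩, ?_⟩
        have e1 : (2:ℝ) • stdVec i - stdVec j - stdVec k
            = (2:ℝ) • stdVec i + (-1:ℝ) • stdVec j + (-1:ℝ) • stdVec k := by module
        have e2 : -((2:ℝ) • stdVec j - stdVec i - stdVec k)
            = (1:ℝ) • stdVec i + (-2:ℝ) • stdVec j + (1:ℝ) • stdVec k := by module
        rw [e1, e2]; erw [inner_triple i j k 2 (-1) (-1) 2 (-1) (-1) hij hik hjk,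
          inner_triple i j k 1 (-2) 1 2 (-1) (-1) hij hik hjk,
          inner_triple i j k 1 (-2) 1 1 (-2) 1 hij hik hjk]
        norm_num
      · refine ⟨(2:ℝ) • stdVec j - stdVec i - stdVec k,
          Or.inr ⟨j, i, k, Ne.symm hij, hjk, hik, Or.inl rfl⟩, ?_⟩
        have e1 : -((2:ℝ) • stdVec i - stdVec j - stdVec k)
            = (-2:ℝ) • stdVec i + (1:ℝ) • stdVec j + (1:ℝ) • stdVec k := by module
        have e2 : (2:ℝ) • stdVec j - stdVec i - stdVec k
            = (-1:ℝ) • stdVec i + (2:ℝ) • stdVec j + (-1:ℝ) • stdVec k := by module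
        rw [e1, e2]; erw [inner_triple i j k (-2) 1 1 (-2) 1 1 hij hik hjk,
          inner_triple i j k (-1) 2 (-1) (-2) 1 1 hij hik hjk,
          inner_triple i j k (-1) 2 (-1) (-1) 2 (-1) hij hik hjk]
        norm_num
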